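/- Let r>0, let m_1 ≠ m_2 be integers ≥1, set c_m = -(π/r)^2·((2m-1)/4)^2, ω_m = ((2m-1)π)/(4r), e_m(s) = 2·cos(ω_m(s+r)), and let α_0 = -(c_{m_1}+c_{m_2}), β_0 = c_{m_1}·c_{m_2} be the intersection point of the rays l_{m_1} and l_{m_2}. Then for every continuous real function y on [-r,r] there exists a unique four times continuously differentiable function x on [-r,r] satisfying the boundary conditions x'(-r) = x'''(-r) = 0, x(r) = x''(r) = 0 and x''''(s) + α_0·x''(s) + β_0·x(s) - Σ_{i=1}^{2} ((1/2r)∫_{-r}^{r} x(t)·e_{m_i}(t) dt)·e_{m_i}(s) = y(s) for all s ∈ [-r,r]. (Bijectivity of the operator G'_x(0,0,α_0,β_0) used in the Lyapunov–Schmidt reduction.) -/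

import Mathlib

open Real Set intervalIntegral

lemma hdcos (a b s : ℝ) : HasDerivAt (fun t => Real.cos (a*t+b)) (-Real.sin (a*s+b) * a) s := by
  have h : HasDerivAt (fun t : ℝ => a*t+b) a s := by
    simpa using ((hasDerivAt_id s).const_mul a).add_const b
  exact (Real.hasDerivAt_cos (a*s+b)).comp s h

lemma hdsin (a b s : ℝ) : HasDerivAt (fun t => Real.sin (a*t+b)) (Real.cos (a*s+b) * a) s := by
  have h : HasDerivAt (fun t : ℝ => a*t+b) a s := by
    simpa using ((hasDerivAt_id s).const_mul a).add_const b
  exact (Real.hasDerivAt_sin (a*s+b)).comp s h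

lemma cont_cos_lin (a b : ℝ) : Continuous fun t : ℝ => Real.cos (a*t+b) :=
  Real.continuous_cos.comp ((continuous_const.mul continuous_id).add continuous_const)

lemma ftc {f F : ℝ → ℝ} (hF : ∀ s, HasDerivAt F (f s) s) (hf : Continuous f) (a b : ℝ) :
    ∫ t in a..b, f t = F b - F a :=
  integral_eq_sub_of_hasDerivAt (fun t _ => hF t) (hf.intervalIntegrable _ _)

lemma coscos (A B : ℝ) : Real.cos A * Real.cos B = Real.cos (A-B)/2 + Real.cos (A+B)/2 := by
  rw [Real.cos_sub, Real.cos_add]; ring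

-- orthogonality integrals
lemma int_cc {a b r : ℝ} (h0 : a - b ≠ 0) (h1 : a + b ≠ 0)
    (s1 : Real.sin (2*(a-b)*r) = 0) (s2 : Real.sin (2*(a+b)*r) = 0) :
    ∫ t in (-r)..r, Real.cos (a*t+a*r) * Real.cos (b*t+b*r) = 0 := by
  have hF : ∀ s : ℝ, HasDerivAt
      (fun t => Real.sin ((a-b)*t+(a-b)*r)/(2*(a-b)) + Real.sin ((a+b)*t+(a+b)*r)/(2*(a+b)))
      (Real.cos (a*s+a*r) * Real.cos (b*s+b*r)) s := by
    intro s
    have h := ((hdsin (a-b) ((a-b)*r) s).div_const (2*(a-b))).add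
      ((hdsin (a+b) ((a+b)*r) s).div_const (2*(a+b)))
    refine h.congr_deriv (Eq.symm ?_)
    have e1 : (a-b)*s+(a-b)*r = (a*s+a*r) - (b*s+b*r) := by ring
    have e2 : (a+b)*s+(a+b)*r = (a*s+a*r) + (b*s+b*r) := by ring
    rw [e1, e2, mul_div_mul_right _ _ h0, mul_div_mul_right _ _ h1, coscos]
  have hc : Continuous fun t => Real.cos (a*t+a*r) * Real.cos (b*t+b*r) := by continuity
  rw [ftc hF hc]
  have e1 : (a-b)*r+(a-b)*r = 2*(a-b)*r := by ring
  have e2 : (a+b)*r+(a+b)*r = 2*(a+b)*r := by ring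
  have e3 : (a-b)*(-r)+(a-b)*r = 0 := by ring
  have e4 : (a+b)*(-r)+(a+b)*r = 0 := by ring
  rw [e1, e2, e3, e4, s1, s2, Real.sin_zero]
  ring

lemma int_cc_self {a r : ℝ} (ha : a ≠ 0) (s1 : Real.sin (4*a*r) = 0) :
    ∫ t in (-r)..r, Real.cos (a*t+a*r) * Real.cos (a*t+a*r) = r := by
  have hF : ∀ s : ℝ, HasDerivAt
      (fun t => t/2 + Real.sin (2*a*t+2*a*r)/(4*a))
      (Real.cos (a*s+a*r) * Real.cos (a*s+a*r)) s := by
    intro s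
    have h := ((hasDerivAt_id s).div_const 2).add ((hdsin (2*a) (2*a*r) s).div_const (4*a))
    refine h.congr_deriv (Eq.symm ?_)
    have e : 2*a*s+2*a*r = 2*(a*s+a*r) := by ring
    have h2a : (2:ℝ)*a ≠ 0 := by simpa using ha
    rw [e, Real.cos_two_mul, show (4:ℝ)*a = 2*(2*a) by ring, mul_div_mul_right _ _ h2a]
    nlinarith [Real.sin_sq_add_cos_sq (a*s+a*r)]
  have hc : Continuous fun t => Real.cos (a*t+a*r) * Real.cos (a*t+a*r) := by continuity
  rw [ftc hF hc]
  have e1 : 2*a*r+2*a*r = 4*a*r := by ring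
  have e2 : 2*a*(-r)+2*a*r = 0 := by ring
  rw [e1, e2, s1, Real.sin_zero]
  ring

lemma contDiff_succ_of {n : ℕ} {f f' : ℝ → ℝ} (h : ∀ s, HasDerivAt f (f' s) s)
    (h' : ContDiff ℝ n f') : ContDiff ℝ (n+1) f := by
  rw [contDiff_succ_iff_deriv]
  refine ⟨fun s => (h s).differentiableAt, by simp, ?_⟩
  have hd : deriv f = f' := funext fun s => (h s).deriv
  rw [hd]; exact h'

lemma cont_of_chain {f f' : ℝ → ℝ} (h : ∀ s, HasDerivAt f (f' s) s) : Continuous f :=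
  continuous_iff_continuousAt.2 fun s => (h s).differentiableAt.continuousAt

/-- integration by parts twice, as single FTC application:
`∫ (f'' E + c² f E) = [f' E - f E']` with `E t = cos (c t + c r)`. -/
lemma ibp2 {r c : ℝ} {f f1 f2 : ℝ → ℝ} (h1 : ∀ s, HasDerivAt f (f1 s) s)
    (h2 : ∀ s, HasDerivAt f1 (f2 s) s) (hf2 : Continuous f2) :
    ∫ t in (-r)..r, (f2 t * Real.cos (c*t+c*r) + c^2 * (f t * Real.cos (c*t+c*r)))
      = (f1 r * Real.cos (c*r+c*r) + f r * Real.sin (c*r+c*r) * c)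
        - (f1 (-r) * Real.cos (c*(-r)+c*r) + f (-r) * Real.sin (c*(-r)+c*r) * c) := by
  have hf : Continuous f := cont_of_chain h1
  have hf1 : Continuous f1 := cont_of_chain h2
  refine ftc (F := fun t => f1 t * Real.cos (c*t+c*r) + f t * Real.sin (c*t+c*r) * c) ?_ ?_ _ _
  · intro s
    have h := ((h2 s).mul (hdcos c (c*r) s)).add (((h1 s).mul (hdsin c (c*r) s)).mul_const c)
    refine h.congr_deriv (Eq.symm ?_)
    ring
  · continuity

/-- uniqueness for 4th-order linear constant-coefficient ODE with zero initial jet,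
via Grönwall. -/
lemma ode_zero {a b α β : ℝ} {w w1 w2 w3 w4 : ℝ → ℝ}
    (h1 : ∀ s, HasDerivAt w (w1 s) s) (h2 : ∀ s, HasDerivAt w1 (w2 s) s)
    (h3 : ∀ s, HasDerivAt w2 (w3 s) s) (h4 : ∀ s, HasDerivAt w3 (w4 s) s)
    (hode : ∀ s ∈ Icc a b, w4 s = -(α * w2 s) - β * w s)
    (ha0 : w a = 0) (ha1 : w1 a = 0) (ha2 : w2 a = 0) (ha3 : w3 a = 0) :
    ∀ s ∈ Icc a b, w s = 0 := by
  set E : ℝ → ℝ := fun s => w s^2 + w1 s^2 + w2 s^2 + w3 s^2 with hE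
  set E' : ℝ → ℝ := fun s => 2*(w s*w1 s + w1 s*w2 s + w2 s*w3 s + w3 s*w4 s) with hE'
  have hdE : ∀ s, HasDerivAt E (E' s) s := by
    intro s
    have h := (((((h1 s).mul (h1 s)).add ((h2 s).mul (h2 s))).add
      ((h3 s).mul (h3 s))).add ((h4 s).mul (h4 s)))
    -- derivative of squares
    have h' := ((((h1 s).pow 2).add ((h2 s).pow 2)).add ((h3 s).pow 2)).add ((h4 s).pow 2)
    refine h'.congr_deriv (Eq.symm ?_)
    simp [hE']
    ring
  set K : ℝ := 3 + |α| + |β| with hK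
  have key : ∀ s ∈ Icc a b, ‖E s‖ ≤ gronwallBound 0 K 0 (s - a) := by
    apply norm_le_gronwallBound_of_norm_deriv_right_le
    · exact (cont_of_chain hdE).continuousOn
    · exact fun t _ => (hdE t).hasDerivWithinAt
    · simp [hE, ha0, ha1, ha2, ha3]
    · intro t ht
      have hodet := hode t (Ico_subset_Icc_self ht)
      rw [Real.norm_eq_abs, Real.norm_eq_abs, abs_le]
      have hEnn : 0 ≤ E t := by positivity
      rw [abs_of_nonneg hEnn]
      constructor
      · simp only [hE', hE, hodet, hK]
        nlinarith [sq_nonneg (w t + w1 t), sq_nonneg (w t - w1 t), sq_nonneg (w1 t + w2 t),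
          sq_nonneg (w1 t - w2 t), sq_nonneg (w2 t + w3 t), sq_nonneg (w2 t - w3 t),
          sq_nonneg (w3 t + w t), sq_nonneg (w3 t - w t),
          abs_nonneg α, abs_nonneg β, le_abs_self α, neg_abs_le α, le_abs_self β, neg_abs_le β,
          sq_nonneg (w t), sq_nonneg (w1 t), sq_nonneg (w2 t), sq_nonneg (w3 t),
          mul_le_mul_of_nonneg_right (le_abs_self α) (sq_nonneg (w2 t)),
          mul_le_mul_of_nonneg_right (le_abs_self β) (sq_nonneg (w t))]
      · simp only [hE', hE, hodet, hK]
        nlinarith [sq_nonneg (w t + w1 t), sq_nonneg (w t - w1 t), sq_nonneg (w1 t + w2 t),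
          sq_nonneg (w1 t - w2 t), sq_nonneg (w2 t + w3 t), sq_nonneg (w2 t - w3 t),
          sq_nonneg (w3 t + w t), sq_nonneg (w3 t - w t),
          abs_nonneg α, abs_nonneg β, le_abs_self α, neg_abs_le α, le_abs_self β, neg_abs_le β,
          sq_nonneg (w t), sq_nonneg (w1 t), sq_nonneg (w2 t), sq_nonneg (w3 t),
          mul_le_mul_of_nonneg_right (le_abs_self α) (sq_nonneg (w2 t)),
          mul_le_mul_of_nonneg_right (le_abs_self β) (sq_nonneg (w t))]
  intro s hs
  have h0 := key s hs
  rw [gronwallBound_ε0_δ0, Real.norm_eq_abs] at h0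
  have : E s = 0 := by
    have : 0 ≤ E s := by positivity
    have := abs_le.1 h0
    linarith [this.2]
  have hEs : w s^2 + w1 s^2 + w2 s^2 + w3 s^2 = 0 := this
  have hw2 : w s ^ 2 = 0 := le_antisymm
    (by nlinarith [sq_nonneg (w1 s), sq_nonneg (w2 s), sq_nonneg (w3 s)]) (sq_nonneg _)
  exact pow_eq_zero_iff (by norm_num) |>.1 hw2

lemma cos_odd_half (k : ℤ) : Real.cos ((2*(k:ℝ)-1)*π/2) = 0 := by
  have e : (2*(k:ℝ)-1)*π/2 = -(π/2 - (k:ℝ)*π) := by ring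
  rw [e, Real.cos_neg, Real.cos_pi_div_two_sub, Real.sin_int_mul_pi]

lemma half_sq {x : ℝ} (h : Real.cos (2*x) = 0) :
    Real.cos x ^ 2 = Real.sin x ^ 2 ∧ Real.cos x ≠ 0 := by
  have h2 := Real.cos_two_mul x
  have hs := Real.sin_sq_add_cos_sq x
  constructor
  · nlinarith
  · intro h0
    rw [h0] at h2
    nlinarith

lemma halfangle {cw sw P Q : ℝ} (h0 : cw^2 = sw^2) (hcne : cw ≠ 0)
    (h : cw*P - sw*Q = 0) : sw*P - cw*Q = 0 := by
  have h2 : cw*(sw*P - cw*Q) = cw*0 := by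
    rw [mul_zero]
    linear_combination sw*h - Q*h0
  exact mul_left_cancel₀ hcne h2

/-- Particular solution of `v'' + ω² v = g` with zero initial data at `-r`. -/
lemma vp {r ω : ℝ} (hω : ω ≠ 0) (g : ℝ → ℝ) (hg : Continuous g) :
    ∃ v v1 : ℝ → ℝ,
      (∀ s, HasDerivAt v (v1 s) s) ∧
      (∀ s, HasDerivAt v1 (g s - ω^2 * v s) s) ∧
      v (-r) = 0 ∧ v1 (-r) = 0 ∧
      (∀ s, v s = (Real.sin (ω*s) * (∫ t in (-r)..s, Real.cos (ω*t) * g t)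
                 - Real.cos (ω*s) * (∫ t in (-r)..s, Real.sin (ω*t) * g t)) / ω) := by
  set Fc : ℝ → ℝ := fun s => ∫ t in (-r)..s, Real.cos (ω*t) * g t with hFc
  set Fs : ℝ → ℝ := fun s => ∫ t in (-r)..s, Real.sin (ω*t) * g t with hFs
  have hgc : Continuous fun t => Real.cos (ω*t) * g t := by continuity
  have hgs : Continuous fun t => Real.sin (ω*t) * g t := by continuity
  have hdFc : ∀ s : ℝ, HasDerivAt Fc (Real.cos (ω*s) * g s) s := fun s =>
    (hgc.integral_hasStrictDerivAt (-r) s).hasDerivAt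
  have hdFs : ∀ s : ℝ, HasDerivAt Fs (Real.sin (ω*s) * g s) s := fun s =>
    (hgs.integral_hasStrictDerivAt (-r) s).hasDerivAt
  have hdsin0 : ∀ s : ℝ, HasDerivAt (fun t => Real.sin (ω*t)) (Real.cos (ω*s)*ω) s := by
    intro s; simpa using hdsin ω 0 s
  have hdcos0 : ∀ s : ℝ, HasDerivAt (fun t => Real.cos (ω*t)) (-Real.sin (ω*s)*ω) s := by
    intro s; simpa using hdcos ω 0 s
  refine ⟨fun s => (Real.sin (ω*s) * Fc s - Real.cos (ω*s) * Fs s) / ω,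
    fun s => Real.cos (ω*s) * Fc s + Real.sin (ω*s) * Fs s, ?_, ?_, ?_, ?_, fun s => rfl⟩
  · intro s
    have h := (((hdsin0 s).mul (hdFc s)).sub ((hdcos0 s).mul (hdFs s))).div_const ω
    refine h.congr_deriv (Eq.symm ?_)
    field_simp
    ring
  · intro s
    have h := ((hdcos0 s).mul (hdFc s)).add ((hdsin0 s).mul (hdFs s))
    refine h.congr_deriv (Eq.symm ?_)
    have hp := Real.sin_sq_add_cos_sq (ω*s)
    field_simp
    linear_combination (-(g s)) * hp
  · simp [hFc, hFs]
  · simp [hFc, hFs]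

lemma chain_of_contDiff {x : ℝ → ℝ} (h : ContDiff ℝ 4 x) :
    (∀ s, HasDerivAt x (iteratedDeriv 1 x s) s) ∧
    (∀ s, HasDerivAt (iteratedDeriv 1 x) (iteratedDeriv 2 x s) s) ∧
    (∀ s, HasDerivAt (iteratedDeriv 2 x) (iteratedDeriv 3 x s) s) ∧
    (∀ s, HasDerivAt (iteratedDeriv 3 x) (iteratedDeriv 4 x s) s) := by
  have h4 : ContDiff ℝ ((3:ℕ)+1) x := by exact_mod_cast h
  rw [contDiff_succ_iff_deriv] at h4
  obtain ⟨hd0, -, h3⟩ := h4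
  have h3' : ContDiff ℝ ((2:ℕ)+1) (deriv x) := by exact_mod_cast h3
  rw [contDiff_succ_iff_deriv] at h3'
  obtain ⟨hd1, -, h2⟩ := h3'
  have h2' : ContDiff ℝ ((1:ℕ)+1) (deriv (deriv x)) := by exact_mod_cast h2
  rw [contDiff_succ_iff_deriv] at h2'
  obtain ⟨hd2, -, h1⟩ := h2'
  have h1' : ContDiff ℝ ((0:ℕ)+1) (deriv (deriv (deriv x))) := by exact_mod_cast h1
  rw [contDiff_succ_iff_deriv] at h1'
  obtain ⟨hd3, -, -⟩ := h1'
  have e1 : iteratedDeriv 1 x = deriv x := by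
    simp [iteratedDeriv_succ, iteratedDeriv_zero]
  have e2 : iteratedDeriv 2 x = deriv (deriv x) := by
    simp [iteratedDeriv_succ' , iteratedDeriv_zero]
  have e3 : iteratedDeriv 3 x = deriv (deriv (deriv x)) := by
    simp [iteratedDeriv_succ', iteratedDeriv_zero]
  have e4 : iteratedDeriv 4 x = deriv (deriv (deriv (deriv x))) := by
    simp [iteratedDeriv_succ', iteratedDeriv_zero]
  refine ⟨?_, ?_, ?_, ?_⟩
  · intro s; rw [e1]; exact (hd0 s).hasDerivAt
  · intro s; rw [e1, e2]; exact (hd1 s).hasDerivAt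
  · intro s; rw [e2, e3]; exact (hd2 s).hasDerivAt
  · intro s; rw [e3, e4]; exact (hd3 s).hasDerivAt

set_option maxHeartbeats 2000000 in
/-- At an intersection point `(α₀,β₀)` of two rays, the operator
`x ↦ x'''' + α₀x'' + β₀x - Σᵢ ⟨x,e_{mᵢ}⟩e_{mᵢ}` on the space of `C⁴` functions satisfying
the boundary conditions is bijective onto the continuous functions on `[-r,r]`. -/
theorem stmt_12 (r : ℝ) (hr : 0 < r)
    (c : ℕ → ℝ)
    (hc : ∀ k : ℕ, c k = -(π / r) ^ 2 * ((2 * (k : ℝ) - 1) / 4) ^ 2)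
    (m₁ m₂ : ℕ) (hm₁ : 1 ≤ m₁) (hm₂ : 1 ≤ m₂) (hne : m₁ ≠ m₂)
    (ω₁ ω₂ : ℝ)
    (hω₁ : ω₁ = ((2 * (m₁ : ℝ) - 1) * π) / (4 * r))
    (hω₂ : ω₂ = ((2 * (m₂ : ℝ) - 1) * π) / (4 * r))
    (e₁ e₂ : ℝ → ℝ)
    (he₁ : e₁ = fun s => 2 * Real.cos (ω₁ * (s + r)))
    (he₂ : e₂ = fun s => 2 * Real.cos (ω₂ * (s + r)))
    (α₀ β₀ : ℝ) (hα₀ : α₀ = -(c m₁ + c m₂)) (hβ₀ : β₀ = c m₁ * c m₂)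
    (y : ℝ → ℝ) (hy : ContinuousOn y (Icc (-r) r)) :
    (∃ x : ℝ → ℝ, ContDiff ℝ 4 x ∧
      iteratedDeriv 1 x (-r) = 0 ∧ iteratedDeriv 3 x (-r) = 0 ∧
      x r = 0 ∧ iteratedDeriv 2 x r = 0 ∧
      ∀ s ∈ Icc (-r) r,
        iteratedDeriv 4 x s + α₀ * iteratedDeriv 2 x s + β₀ * x s
          - ((1 / (2 * r)) * ∫ t in (-r)..r, x t * e₁ t) * e₁ s
          - ((1 / (2 * r)) * ∫ t in (-r)..r, x t * e₂ t) * e₂ s = y s) ∧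
    (∀ x₁ x₂ : ℝ → ℝ, ContDiff ℝ 4 x₁ → ContDiff ℝ 4 x₂ →
      iteratedDeriv 1 x₁ (-r) = 0 → iteratedDeriv 3 x₁ (-r) = 0 →
      x₁ r = 0 → iteratedDeriv 2 x₁ r = 0 →
      iteratedDeriv 1 x₂ (-r) = 0 → iteratedDeriv 3 x₂ (-r) = 0 →
      x₂ r = 0 → iteratedDeriv 2 x₂ r = 0 →
      (∀ s ∈ Icc (-r) r,
        iteratedDeriv 4 x₁ s + α₀ * iteratedDeriv 2 x₁ s + β₀ * x₁ s
          - ((1 / (2 * r)) * ∫ t in (-r)..r, x₁ t * e₁ t) * e₁ s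
          - ((1 / (2 * r)) * ∫ t in (-r)..r, x₁ t * e₂ t) * e₂ s = y s) →
      (∀ s ∈ Icc (-r) r,
        iteratedDeriv 4 x₂ s + α₀ * iteratedDeriv 2 x₂ s + β₀ * x₂ s
          - ((1 / (2 * r)) * ∫ t in (-r)..r, x₂ t * e₁ t) * e₁ s
          - ((1 / (2 * r)) * ∫ t in (-r)..r, x₂ t * e₂ t) * e₂ s = y s) →
      ∀ s ∈ Icc (-r) r, x₁ s = x₂ s) := by
  subst he₁ he₂
  have hrne : r ≠ 0 := ne_of_gt hr
  have hπ : (0:ℝ) < π := Real.pi_pos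
  have hm₁' : (1:ℝ) ≤ (m₁:ℝ) := by exact_mod_cast hm₁
  have hm₂' : (1:ℝ) ≤ (m₂:ℝ) := by exact_mod_cast hm₂
  have hw1pos : 0 < ω₁ := by
    rw [hω₁]; apply div_pos (mul_pos (by linarith) hπ) (by linarith)
  have hw2pos : 0 < ω₂ := by
    rw [hω₂]; apply div_pos (mul_pos (by linarith) hπ) (by linarith)
  have hwne : ω₁ ≠ ω₂ := by
    rw [hω₁, hω₂]
    intro h
    apply hne
    have h4r : (4:ℝ)*r ≠ 0 := by positivity
    field_simp at h
    exact_mod_cast (by linarith : (m₁:ℝ) = m₂)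
  have hsqne : ω₁^2 ≠ ω₂^2 := by
    intro h
    rcases mul_eq_zero.1 (show (ω₂-ω₁)*(ω₂+ω₁) = 0 by linear_combination -h) with h' | h'
    · exact hwne (by linarith)
    · linarith
  have hww2 : ω₂^2 - ω₁^2 ≠ 0 := fun h => hsqne (by linarith)
  have hα : α₀ = ω₁^2 + ω₂^2 := by
    rw [hα₀, hc m₁, hc m₂, hω₁, hω₂]
    field_simp
    ring
  have hβ : β₀ = ω₁^2 * ω₂^2 := by
    rw [hβ₀, hc m₁, hc m₂, hω₁, hω₂]
    field_simp
  -- trig values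
  have hc1 : Real.cos (ω₁*r + ω₁*r) = 0 := by
    rw [hω₁, show ((2*(m₁:ℝ)-1)*π)/(4*r)*r + ((2*(m₁:ℝ)-1)*π)/(4*r)*r
      = (2*((m₁:ℤ):ℝ)-1)*π/2 by push_cast; field_simp; ring]
    exact cos_odd_half m₁
  have hc2 : Real.cos (ω₂*r + ω₂*r) = 0 := by
    rw [hω₂, show ((2*(m₂:ℝ)-1)*π)/(4*r)*r + ((2*(m₂:ℝ)-1)*π)/(4*r)*r
      = (2*((m₂:ℤ):ℝ)-1)*π/2 by push_cast; field_simp; ring]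
    exact cos_odd_half m₂
  have h4w1 : Real.sin (4*ω₁*r) = 0 := by
    rw [hω₁, show 4*(((2*(m₁:ℝ)-1)*π)/(4*r))*r = ((2*(m₁:ℤ)-1 : ℤ):ℝ)*π by
      push_cast; field_simp]
    exact Real.sin_int_mul_pi _
  have h4w2 : Real.sin (4*ω₂*r) = 0 := by
    rw [hω₂, show 4*(((2*(m₂:ℝ)-1)*π)/(4*r))*r = ((2*(m₂:ℤ)-1 : ℤ):ℝ)*π by
      push_cast; field_simp]
    exact Real.sin_int_mul_pi _
  have hsd : Real.sin (2*(ω₁-ω₂)*r) = 0 := by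
    rw [hω₁, hω₂, show 2*(((2*(m₁:ℝ)-1)*π)/(4*r) - ((2*(m₂:ℝ)-1)*π)/(4*r))*r
      = (((m₁:ℤ)-(m₂:ℤ) : ℤ):ℝ)*π by push_cast; field_simp; ring]
    exact Real.sin_int_mul_pi _
  have hss : Real.sin (2*(ω₁+ω₂)*r) = 0 := by
    rw [hω₁, hω₂, show 2*(((2*(m₁:ℝ)-1)*π)/(4*r) + ((2*(m₂:ℝ)-1)*π)/(4*r))*r
      = (((m₁:ℤ)+(m₂:ℤ)-1 : ℤ):ℝ)*π by push_cast; field_simp; ring]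
    exact Real.sin_int_mul_pi _
  have hsd' : Real.sin (2*(ω₂-ω₁)*r) = 0 := by
    rw [show 2*(ω₂-ω₁)*r = -(2*(ω₁-ω₂)*r) by ring, Real.sin_neg, hsd, neg_zero]
  -- orthogonality integrals
  have I11 : ∫ t in (-r)..r, Real.cos (ω₁*t+ω₁*r) * Real.cos (ω₁*t+ω₁*r) = r :=
    int_cc_self (ne_of_gt hw1pos) h4w1
  have I22 : ∫ t in (-r)..r, Real.cos (ω₂*t+ω₂*r) * Real.cos (ω₂*t+ω₂*r) = r :=
    int_cc_self (ne_of_gt hw2pos) h4w2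
  have I12 : ∫ t in (-r)..r, Real.cos (ω₁*t+ω₁*r) * Real.cos (ω₂*t+ω₂*r) = 0 :=
    int_cc (sub_ne_zero.2 hwne) (by positivity) hsd hss
  have I21 : ∫ t in (-r)..r, Real.cos (ω₂*t+ω₂*r) * Real.cos (ω₁*t+ω₁*r) = 0 :=
    int_cc (sub_ne_zero.2 (Ne.symm hwne)) (by positivity) hsd'
      (by rw [show 2*(ω₂+ω₁)*r = 2*(ω₁+ω₂)*r by ring]; exact hss)
  have huIcc : uIcc (-r) r = Icc (-r) r := uIcc_of_le (by linarith)
  have hcosc1 : Continuous fun t => Real.cos (ω₁*t+ω₁*r) := cont_cos_lin _ _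
  have hcosc2 : Continuous fun t => Real.cos (ω₂*t+ω₂*r) := cont_cos_lin _ _
  have hsqne' : ω₁^2 - ω₂^2 ≠ 0 := sub_ne_zero.2 hsqne
  constructor
  · -- EXISTENCE
    simp only [mul_add]
    -- continuous extension of y
    set yc : ℝ → ℝ := fun s => y (Set.projIcc (-r) r (by linarith) s) with hycdef
    have hycc : Continuous yc :=
      hy.comp_continuous (continuous_subtype_val.comp continuous_projIcc)
        (fun s => (Set.projIcc (-r) r (by linarith) s).2)
    have hyeq : ∀ s ∈ Icc (-r) r, yc s = y s := by
      intro s hs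
      simp only [hycdef]
      rw [Set.projIcc_of_mem _ hs]
    set P₁ : ℝ := ∫ t in (-r)..r, yc t * Real.cos (ω₁*t+ω₁*r) with hP₁def
    set P₂ : ℝ := ∫ t in (-r)..r, yc t * Real.cos (ω₂*t+ω₂*r) with hP₂def
    set a₁ : ℝ := -P₁/(2*r) with ha₁def
    set a₂ : ℝ := -P₂/(2*r) with ha₂def
    set g : ℝ → ℝ := fun s => yc s + a₁*(2*Real.cos (ω₁*s+ω₁*r)) + a₂*(2*Real.cos (ω₂*s+ω₂*r))
      with hgdef
    have hg : Continuous g := by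
      apply (hycc.add (continuous_const.mul (continuous_const.mul hcosc1))).add
        (continuous_const.mul (continuous_const.mul hcosc2))
    have hgE1 : ∫ t in (-r)..r, g t * Real.cos (ω₁*t+ω₁*r) = 0 := by
      have e : (fun t => g t * Real.cos (ω₁*t+ω₁*r))
          = fun t => yc t * Real.cos (ω₁*t+ω₁*r)
            + ((2*a₁) * (Real.cos (ω₁*t+ω₁*r) * Real.cos (ω₁*t+ω₁*r))
            + (2*a₂) * (Real.cos (ω₂*t+ω₂*r) * Real.cos (ω₁*t+ω₁*r))) := by
        funext t
        simp only [hgdef]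
        ring
      rw [e, intervalIntegral.integral_add ((hycc.fun_mul hcosc1).intervalIntegrable _ _)
        ((((hcosc1.fun_mul hcosc1).intervalIntegrable _ _).const_mul _).add
          (((hcosc2.fun_mul hcosc1).intervalIntegrable _ _).const_mul _)),
        intervalIntegral.integral_add
          (((hcosc1.fun_mul hcosc1).intervalIntegrable _ _).const_mul _)
          (((hcosc2.fun_mul hcosc1).intervalIntegrable _ _).const_mul _),
        intervalIntegral.integral_const_mul, intervalIntegral.integral_const_mul, I11, I21,
        ← hP₁def, ha₁def]
      field_simp
      ring
    have hgE2 : ∫ t in (-r)..r, g t * Real.cos (ω₂*t+ω₂*r) = 0 := by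
      have e : (fun t => g t * Real.cos (ω₂*t+ω₂*r))
          = fun t => yc t * Real.cos (ω₂*t+ω₂*r)
            + ((2*a₁) * (Real.cos (ω₁*t+ω₁*r) * Real.cos (ω₂*t+ω₂*r))
            + (2*a₂) * (Real.cos (ω₂*t+ω₂*r) * Real.cos (ω₂*t+ω₂*r))) := by
        funext t
        simp only [hgdef]
        ring
      rw [e, intervalIntegral.integral_add ((hycc.fun_mul hcosc2).intervalIntegrable _ _)
        ((((hcosc1.fun_mul hcosc2).intervalIntegrable _ _).const_mul _).add
          (((hcosc2.fun_mul hcosc2).intervalIntegrable _ _).const_mul _)),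
        intervalIntegral.integral_add
          (((hcosc1.fun_mul hcosc2).intervalIntegrable _ _).const_mul _)
          (((hcosc2.fun_mul hcosc2).intervalIntegrable _ _).const_mul _),
        intervalIntegral.integral_const_mul, intervalIntegral.integral_const_mul, I12, I22,
        ← hP₂def, ha₂def]
      field_simp
      ring
    -- first reduction: v'' + ω₂² v = g
    obtain ⟨v, v1, hdv1, hdv2, hvm, hv1m, hvdef⟩ := vp (r := r) (ne_of_gt hw2pos) g hg
    have hvc : Continuous v := cont_of_chain hdv1
    have hv1c : Continuous v1 := cont_of_chain hdv2
    -- v r = 0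
    have hPQ2 : Real.cos (ω₂*r) * (∫ t in (-r)..r, Real.cos (ω₂*t) * g t)
        - Real.sin (ω₂*r) * (∫ t in (-r)..r, Real.sin (ω₂*t) * g t) = 0 := by
      have hic : Continuous fun t : ℝ => Real.cos (ω₂*t) * g t :=
        ((Real.continuous_cos.comp (continuous_const.mul continuous_id)).mul hg)
      have his : Continuous fun t : ℝ => Real.sin (ω₂*t) * g t :=
        ((Real.continuous_sin.comp (continuous_const.mul continuous_id)).mul hg)
      rw [← intervalIntegral.integral_const_mul, ← intervalIntegral.integral_const_mul,
        ← intervalIntegral.integral_sub ((continuous_const.fun_mul hic).intervalIntegrable _ _)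
          ((continuous_const.fun_mul his).intervalIntegrable _ _)]
      have e : (fun t => Real.cos (ω₂*r) * (Real.cos (ω₂*t) * g t)
          - Real.sin (ω₂*r) * (Real.sin (ω₂*t) * g t))
          = fun t => g t * Real.cos (ω₂*t+ω₂*r) := by
        funext t
        rw [Real.cos_add]
        ring
      rw [e, hgE2]
    have hsq2 := half_sq (x := ω₂*r) (by rw [two_mul]; exact hc2)
    have hvr : v r = 0 := by
      rw [hvdef r, halfangle hsq2.1 hsq2.2 hPQ2, zero_div]
    -- ⟨v, E₁⟩ = 0
    have hIBP := ibp2 (r := r) (c := ω₁) hdv1 hdv2 (hg.sub (continuous_const.mul hvc))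
    rw [hvr, hv1m, hvm, hc1, show ω₁*(-r)+ω₁*r = 0 by ring] at hIBP
    simp only [Real.sin_zero, Real.cos_zero, mul_zero, zero_mul, mul_one, add_zero, zero_add,
      sub_zero, sub_self] at hIBP
    have hvE1 : ∫ t in (-r)..r, v t * Real.cos (ω₁*t+ω₁*r) = 0 := by
      have e : (fun t => (g t - ω₂^2 * v t) * Real.cos (ω₁*t+ω₁*r)
          + ω₁^2*(v t * Real.cos (ω₁*t+ω₁*r)))
          = fun t => g t * Real.cos (ω₁*t+ω₁*r)
            + (ω₁^2-ω₂^2) * (v t * Real.cos (ω₁*t+ω₁*r)) := by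
        funext t
        ring
      rw [e, intervalIntegral.integral_add ((hg.fun_mul hcosc1).intervalIntegrable _ _)
        (((hvc.fun_mul hcosc1).intervalIntegrable _ _).const_mul _), hgE1,
        intervalIntegral.integral_const_mul, zero_add] at hIBP
      rcases mul_eq_zero.1 hIBP with h' | h'
      · exact absurd h' hsqne'
      · exact h'
    -- second reduction: u'' + ω₁² u = v
    obtain ⟨u, u1, hdu1, hdu2, hum, hu1m, hudef⟩ := vp (r := r) (ne_of_gt hw1pos) v hvc
    have huc : Continuous u := cont_of_chain hdu1
    have hu1c : Continuous u1 := cont_of_chain hdu2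
    -- u r = 0
    have hPQ1 : Real.cos (ω₁*r) * (∫ t in (-r)..r, Real.cos (ω₁*t) * v t)
        - Real.sin (ω₁*r) * (∫ t in (-r)..r, Real.sin (ω₁*t) * v t) = 0 := by
      have hic : Continuous fun t : ℝ => Real.cos (ω₁*t) * v t :=
        ((Real.continuous_cos.comp (continuous_const.mul continuous_id)).mul hvc)
      have his : Continuous fun t : ℝ => Real.sin (ω₁*t) * v t :=
        ((Real.continuous_sin.comp (continuous_const.mul continuous_id)).mul hvc)
      rw [← intervalIntegral.integral_const_mul, ← intervalIntegral.integral_const_mul,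
        ← intervalIntegral.integral_sub ((continuous_const.fun_mul hic).intervalIntegrable _ _)
          ((continuous_const.fun_mul his).intervalIntegrable _ _)]
      have e : (fun t => Real.cos (ω₁*r) * (Real.cos (ω₁*t) * v t)
          - Real.sin (ω₁*r) * (Real.sin (ω₁*t) * v t))
          = fun t => v t * Real.cos (ω₁*t+ω₁*r) := by
        funext t
        rw [Real.cos_add]
        ring
      rw [e, hvE1]
    have hsq1 := half_sq (x := ω₁*r) (by rw [two_mul]; exact hc1)
    have hur : u r = 0 := by
      rw [hudef r, halfangle hsq1.1 hsq1.2 hPQ1, zero_div]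
    -- constants
    set U₁ : ℝ := ∫ t in (-r)..r, u t * (2*Real.cos (ω₁*t+ω₁*r)) with hU₁def
    set U₂ : ℝ := ∫ t in (-r)..r, u t * (2*Real.cos (ω₂*t+ω₂*r)) with hU₂def
    set A : ℝ := (2*r*a₁ - U₁)/(4*r) with hAdef
    set B : ℝ := (2*r*a₂ - U₂)/(4*r) with hBdef
    -- the solution
    set x : ℝ → ℝ := fun s => u s + A*(2*Real.cos (ω₁*s+ω₁*r)) + B*(2*Real.cos (ω₂*s+ω₂*r))
      with hxdef
    set x1 : ℝ → ℝ := fun s => u1 s - 2*A*ω₁*Real.sin (ω₁*s+ω₁*r) - 2*B*ω₂*Real.sin (ω₂*s+ω₂*r)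
      with hx1def
    set x2 : ℝ → ℝ := fun s => v s - ω₁^2*u s - 2*A*ω₁^2*Real.cos (ω₁*s+ω₁*r)
      - 2*B*ω₂^2*Real.cos (ω₂*s+ω₂*r) with hx2def
    set x3 : ℝ → ℝ := fun s => v1 s - ω₁^2*u1 s + 2*A*ω₁^3*Real.sin (ω₁*s+ω₁*r)
      + 2*B*ω₂^3*Real.sin (ω₂*s+ω₂*r) with hx3def
    set x4 : ℝ → ℝ := fun s => g s - ω₂^2*v s - ω₁^2*(v s - ω₁^2*u s)
      + 2*A*ω₁^4*Real.cos (ω₁*s+ω₁*r) + 2*B*ω₂^4*Real.cos (ω₂*s+ω₂*r) with hx4def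
    have hdx1 : ∀ s, HasDerivAt x (x1 s) s := by
      intro s
      have h := ((hdu1 s).add (((hdcos ω₁ (ω₁*r) s).const_mul 2).const_mul A)).add
        (((hdcos ω₂ (ω₂*r) s).const_mul 2).const_mul B)
      refine h.congr_deriv (Eq.symm ?_)
      simp only [hx1def]
      ring
    have hdx2 : ∀ s, HasDerivAt x1 (x2 s) s := by
      intro s
      have h := ((hdu2 s).sub ((hdsin ω₁ (ω₁*r) s).const_mul (2*A*ω₁))).sub
        ((hdsin ω₂ (ω₂*r) s).const_mul (2*B*ω₂))
      refine h.congr_deriv (Eq.symm ?_)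
      simp only [hx2def]
      ring
    have hdx3 : ∀ s, HasDerivAt x2 (x3 s) s := by
      intro s
      have h := ((((hdv1 s).sub ((hdu1 s).const_mul (ω₁^2))).sub
        ((hdcos ω₁ (ω₁*r) s).const_mul (2*A*ω₁^2))).sub
        ((hdcos ω₂ (ω₂*r) s).const_mul (2*B*ω₂^2)))
      refine h.congr_deriv (Eq.symm ?_)
      simp only [hx3def]
      ring
    have hdx4 : ∀ s, HasDerivAt x3 (x4 s) s := by
      intro s
      have h := ((((hdv2 s).sub ((hdu2 s).const_mul (ω₁^2))).add
        ((hdsin ω₁ (ω₁*r) s).const_mul (2*A*ω₁^3))).add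
        ((hdsin ω₂ (ω₂*r) s).const_mul (2*B*ω₂^3)))
      refine h.congr_deriv (Eq.symm ?_)
      simp only [hx4def]
      ring
    have hx4c : Continuous x4 := by
      have : Continuous fun s => g s - ω₂^2*v s - ω₁^2*(v s - ω₁^2*u s) :=
        (hg.sub (continuous_const.mul hvc)).sub
          (continuous_const.mul (hvc.sub (continuous_const.mul huc)))
      exact (this.add (continuous_const.mul hcosc1)).add (continuous_const.mul hcosc2)
    -- smoothness
    have hcd : ContDiff ℝ 4 x := by
      have c0 : ContDiff ℝ (0:ℕ) x4 := by
        rw [show ((0:ℕ) : WithTop ℕ∞) = 0 from rfl, contDiff_zero]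
        exact hx4c
      have c1 : ContDiff ℝ (0+1 : ℕ) x3 := contDiff_succ_of hdx4 c0
      have c2 : ContDiff ℝ (1+1 : ℕ) x2 := contDiff_succ_of hdx3 c1
      have c3 : ContDiff ℝ (2+1 : ℕ) x1 := contDiff_succ_of hdx2 c2
      have c4 : ContDiff ℝ (3+1 : ℕ) x := contDiff_succ_of hdx1 c3
      exact_mod_cast c4
    -- iterated derivatives
    have hit1 : iteratedDeriv 1 x = x1 := by
      rw [iteratedDeriv_one]
      exact funext fun s => (hdx1 s).deriv
    have hit2 : iteratedDeriv 2 x = x2 := by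
      rw [show (2:ℕ) = 1+1 from rfl, iteratedDeriv_succ, hit1]
      exact funext fun s => (hdx2 s).deriv
    have hit3 : iteratedDeriv 3 x = x3 := by
      rw [show (3:ℕ) = 2+1 from rfl, iteratedDeriv_succ, hit2]
      exact funext fun s => (hdx3 s).deriv
    have hit4 : iteratedDeriv 4 x = x4 := by
      rw [show (4:ℕ) = 3+1 from rfl, iteratedDeriv_succ, hit3]
      exact funext fun s => (hdx4 s).deriv
    -- the inner products of x with e₁, e₂
    have hxint1 : ∫ t in (-r)..r, x t * (2*Real.cos (ω₁*t+ω₁*r)) = U₁ + 4*A*r := by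
      have e : (fun t => x t * (2*Real.cos (ω₁*t+ω₁*r)))
          = fun t => u t * (2*Real.cos (ω₁*t+ω₁*r))
            + ((4*A) * (Real.cos (ω₁*t+ω₁*r) * Real.cos (ω₁*t+ω₁*r))
            + (4*B) * (Real.cos (ω₂*t+ω₂*r) * Real.cos (ω₁*t+ω₁*r))) := by
        funext t
        simp only [hxdef]
        ring
      rw [e, intervalIntegral.integral_add
        ((huc.fun_mul (continuous_const.fun_mul hcosc1)).intervalIntegrable _ _)
        ((((hcosc1.fun_mul hcosc1).intervalIntegrable _ _).const_mul _).add
          (((hcosc2.fun_mul hcosc1).intervalIntegrable _ _).const_mul _)),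
        intervalIntegral.integral_add
          (((hcosc1.fun_mul hcosc1).intervalIntegrable _ _).const_mul _)
          (((hcosc2.fun_mul hcosc1).intervalIntegrable _ _).const_mul _),
        intervalIntegral.integral_const_mul, intervalIntegral.integral_const_mul, I11, I21,
        ← hU₁def]
      ring
    have hxint2 : ∫ t in (-r)..r, x t * (2*Real.cos (ω₂*t+ω₂*r)) = U₂ + 4*B*r := by
      have e : (fun t => x t * (2*Real.cos (ω₂*t+ω₂*r)))
          = fun t => u t * (2*Real.cos (ω₂*t+ω₂*r))
            + ((4*A) * (Real.cos (ω₁*t+ω₁*r) * Real.cos (ω₂*t+ω₂*r))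
            + (4*B) * (Real.cos (ω₂*t+ω₂*r) * Real.cos (ω₂*t+ω₂*r))) := by
        funext t
        simp only [hxdef]
        ring
      rw [e, intervalIntegral.integral_add
        ((huc.fun_mul (continuous_const.fun_mul hcosc2)).intervalIntegrable _ _)
        ((((hcosc1.fun_mul hcosc2).intervalIntegrable _ _).const_mul _).add
          (((hcosc2.fun_mul hcosc2).intervalIntegrable _ _).const_mul _)),
        intervalIntegral.integral_add
          (((hcosc1.fun_mul hcosc2).intervalIntegrable _ _).const_mul _)
          (((hcosc2.fun_mul hcosc2).intervalIntegrable _ _).const_mul _),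
        intervalIntegral.integral_const_mul, intervalIntegral.integral_const_mul, I12, I22,
        ← hU₂def]
      ring
    have hcoef1 : (1/(2*r)) * (U₁ + 4*A*r) = a₁ := by
      rw [hAdef]
      field_simp
      ring
    have hcoef2 : (1/(2*r)) * (U₂ + 4*B*r) = a₂ := by
      rw [hBdef]
      field_simp
      ring
    refine ⟨x, hcd, ?_, ?_, ?_, ?_, ?_⟩
    · rw [hit1]
      simp only [hx1def]
      rw [show ω₁*(-r)+ω₁*r = 0 by ring, show ω₂*(-r)+ω₂*r = 0 by ring, Real.sin_zero, hu1m]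
      ring
    · rw [hit3]
      simp only [hx3def]
      rw [show ω₁*(-r)+ω₁*r = 0 by ring, show ω₂*(-r)+ω₂*r = 0 by ring, Real.sin_zero,
        hu1m, hv1m]
      ring
    · simp only [hxdef]
      rw [hur, hc1, hc2]
      ring
    · rw [hit2]
      simp only [hx2def]
      rw [hur, hvr, hc1, hc2]
      ring
    · intro s hs
      rw [hit2, hit4, hxint1, hxint2, hcoef1, hcoef2, ← hyeq s hs]
      simp only [hx4def, hx2def, hxdef, hgdef]
      rw [hα, hβ]
      ring

  · -- uniqueness
    intro x₁ x₂ hx₁ hx₂ hb1 hb3 hbr hbr2 hb1' hb3' hbr' hbr2' heq₁ heq₂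
    simp only [mul_add] at heq₁ heq₂
    obtain ⟨hX1, hX2, hX3, hX4⟩ := chain_of_contDiff hx₁
    obtain ⟨hY1, hY2, hY3, hY4⟩ := chain_of_contDiff hx₂
    set z : ℝ → ℝ := fun t => x₁ t - x₂ t with hzdef
    set z1 : ℝ → ℝ := fun t => iteratedDeriv 1 x₁ t - iteratedDeriv 1 x₂ t with hz1def
    set z2 : ℝ → ℝ := fun t => iteratedDeriv 2 x₁ t - iteratedDeriv 2 x₂ t with hz2def
    set z3 : ℝ → ℝ := fun t => iteratedDeriv 3 x₁ t - iteratedDeriv 3 x₂ t with hz3def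
    set z4 : ℝ → ℝ := fun t => iteratedDeriv 4 x₁ t - iteratedDeriv 4 x₂ t with hz4def
    have hz1 : ∀ s, HasDerivAt z (z1 s) s := fun s => (hX1 s).sub (hY1 s)
    have hz2 : ∀ s, HasDerivAt z1 (z2 s) s := fun s => (hX2 s).sub (hY2 s)
    have hz3 : ∀ s, HasDerivAt z2 (z3 s) s := fun s => (hX3 s).sub (hY3 s)
    have hz4 : ∀ s, HasDerivAt z3 (z4 s) s := fun s => (hX4 s).sub (hY4 s)
    have hzc : Continuous z := cont_of_chain hz1
    have hz1c : Continuous z1 := cont_of_chain hz2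
    have hz2c : Continuous z2 := cont_of_chain hz3
    have hz3c : Continuous z3 := cont_of_chain hz4
    have hz4c : Continuous z4 :=
      ((hx₁.continuous_iteratedDeriv 4 (by norm_num)).sub
        (hx₂.continuous_iteratedDeriv 4 (by norm_num)))
    -- boundary values of z
    have hza : z r = 0 := by simp only [hzdef]; rw [hbr, hbr', sub_zero]
    have hza1 : z1 (-r) = 0 := by simp only [hz1def]; rw [hb1, hb1', sub_zero]
    have hza2 : z2 r = 0 := by simp only [hz2def]; rw [hbr2, hbr2', sub_zero]
    have hza3 : z3 (-r) = 0 := by simp only [hz3def]; rw [hb3, hb3', sub_zero]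
    -- the ODE satisfied by z on Icc
    set K₁ : ℝ := (1/(2*r)) * (∫ t in (-r)..r, x₁ t * (2*Real.cos (ω₁*t+ω₁*r)))
      - (1/(2*r)) * (∫ t in (-r)..r, x₂ t * (2*Real.cos (ω₁*t+ω₁*r))) with hK₁def
    set K₂ : ℝ := (1/(2*r)) * (∫ t in (-r)..r, x₁ t * (2*Real.cos (ω₂*t+ω₂*r)))
      - (1/(2*r)) * (∫ t in (-r)..r, x₂ t * (2*Real.cos (ω₂*t+ω₂*r))) with hK₂def
    have hzeq : ∀ s ∈ Icc (-r) r, z4 s + α₀ * z2 s + β₀ * z s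
        - K₁ * (2*Real.cos (ω₁*s+ω₁*r)) - K₂ * (2*Real.cos (ω₂*s+ω₂*r)) = 0 := by
      intro s hs
      have h1 := heq₁ s hs
      have h2 := heq₂ s hs
      simp only [hz4def, hz2def, hzdef, hK₁def, hK₂def]
      linear_combination h1 - h2
    -- K₁ = 0 and K₂ = 0 via integration by parts
    have hB1 : ∫ t in (-r)..r,
        (z4 t * Real.cos (ω₁*t+ω₁*r) + ω₁^2*(z2 t * Real.cos (ω₁*t+ω₁*r))) = 0 := by
      have h := ibp2 (r:=r) (c:=ω₁) hz3 hz4 hz4c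
      rw [hza2, hza3, hc1, show ω₁*(-r)+ω₁*r = 0 by ring] at h
      simpa using h
    have hB2 : ∫ t in (-r)..r,
        (z2 t * Real.cos (ω₁*t+ω₁*r) + ω₁^2*(z t * Real.cos (ω₁*t+ω₁*r))) = 0 := by
      have h := ibp2 (r:=r) (c:=ω₁) hz1 hz2 hz2c
      rw [hza, hza1, hc1, show ω₁*(-r)+ω₁*r = 0 by ring] at h
      simpa using h
    have hB1' : ∫ t in (-r)..r,
        (z4 t * Real.cos (ω₂*t+ω₂*r) + ω₂^2*(z2 t * Real.cos (ω₂*t+ω₂*r))) = 0 := by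
      have h := ibp2 (r:=r) (c:=ω₂) hz3 hz4 hz4c
      rw [hza2, hza3, hc2, show ω₂*(-r)+ω₂*r = 0 by ring] at h
      simpa using h
    have hB2' : ∫ t in (-r)..r,
        (z2 t * Real.cos (ω₂*t+ω₂*r) + ω₂^2*(z t * Real.cos (ω₂*t+ω₂*r))) = 0 := by
      have h := ibp2 (r:=r) (c:=ω₂) hz1 hz2 hz2c
      rw [hza, hza1, hc2, show ω₂*(-r)+ω₂*r = 0 by ring] at h
      simpa using h
    have hint : ∀ (f : ℝ → ℝ) (ω : ℝ), Continuous f →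
        IntervalIntegrable (fun t => f t * Real.cos (ω*t+ω*r)) MeasureTheory.volume (-r) r := by
      intro f ω hf
      exact (hf.mul (cont_cos_lin _ _)).intervalIntegrable _ _
    have hJcalc : ∀ (ω : ℝ), (∀ t, Real.cos (ω*t+ω*r) = Real.cos (ω*t+ω*r)) →
        β₀ - α₀*ω^2 + ω^4 = 0 →
        (∫ t in (-r)..r, (z4 t * Real.cos (ω*t+ω*r) + ω^2*(z2 t * Real.cos (ω*t+ω*r)))) = 0 →
        (∫ t in (-r)..r, (z2 t * Real.cos (ω*t+ω*r) + ω^2*(z t * Real.cos (ω*t+ω*r)))) = 0 →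
        ∫ t in (-r)..r, (z4 t + α₀*z2 t + β₀*z t) * Real.cos (ω*t+ω*r) = 0 := by
      intro ω _ hco hA hBB
      have e : (fun t => (z4 t + α₀*z2 t + β₀*z t) * Real.cos (ω*t+ω*r))
          = fun t => (z4 t * Real.cos (ω*t+ω*r) + ω^2*(z2 t * Real.cos (ω*t+ω*r)))
            + (α₀-ω^2) * (z2 t * Real.cos (ω*t+ω*r) + ω^2*(z t * Real.cos (ω*t+ω*r))) := by
        funext t
        linear_combination (z t * Real.cos (ω*t+ω*r)) * hco
      rw [e]
      have i1 : IntervalIntegrable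
          (fun t => z4 t * Real.cos (ω*t+ω*r) + ω^2*(z2 t * Real.cos (ω*t+ω*r)))
          MeasureTheory.volume (-r) r :=
        (hint z4 ω hz4c).add ((hint z2 ω hz2c).const_mul _)
      have i2 : IntervalIntegrable
          (fun t => (α₀-ω^2) * (z2 t * Real.cos (ω*t+ω*r) + ω^2*(z t * Real.cos (ω*t+ω*r))))
          MeasureTheory.volume (-r) r :=
        ((hint z2 ω hz2c).add ((hint z ω hzc).const_mul _)).const_mul _
      rw [intervalIntegral.integral_add i1 i2, hA, intervalIntegral.integral_const_mul, hBB]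
      ring
    have hJ1 : ∫ t in (-r)..r, (z4 t + α₀*z2 t + β₀*z t) * Real.cos (ω₁*t+ω₁*r) = 0 :=
      hJcalc ω₁ (fun t => rfl) (by rw [hα, hβ]; ring) hB1 hB2
    have hJ2 : ∫ t in (-r)..r, (z4 t + α₀*z2 t + β₀*z t) * Real.cos (ω₂*t+ω₂*r) = 0 :=
      hJcalc ω₂ (fun t => rfl) (by rw [hα, hβ]; ring) hB1' hB2'
    -- other evaluation of the same integrals using the ODE
    have hKside : ∀ (ω : ℝ), Continuous (fun t => Real.cos (ω*t+ω*r)) →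
        (∫ t in (-r)..r, Real.cos (ω₁*t+ω₁*r) * Real.cos (ω*t+ω*r)) = (if ω = ω₁ then r else 0) →
        True := fun _ _ _ => trivial
    have hzeq' : ∀ t ∈ Icc (-r) r, (z4 t + α₀*z2 t + β₀*z t) =
        K₁ * (2*Real.cos (ω₁*t+ω₁*r)) + K₂ * (2*Real.cos (ω₂*t+ω₂*r)) := by
      intro t ht
      have := hzeq t ht
      linarith
    have hcong : ∀ (ω : ℝ),
        (∫ t in (-r)..r, (z4 t + α₀*z2 t + β₀*z t) * Real.cos (ω*t+ω*r))
        = ∫ t in (-r)..r, (K₁ * (2*Real.cos (ω₁*t+ω₁*r)) + K₂ * (2*Real.cos (ω₂*t+ω₂*r)))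
            * Real.cos (ω*t+ω*r) := by
      intro ω
      apply intervalIntegral.integral_congr
      intro t ht
      rw [huIcc] at ht
      simp only
      rw [hzeq' t ht]
    have hexp1 : ∫ t in (-r)..r, (K₁ * (2*Real.cos (ω₁*t+ω₁*r)) + K₂ * (2*Real.cos (ω₂*t+ω₂*r)))
        * Real.cos (ω₁*t+ω₁*r) = 2*K₁*r := by
      have e : (fun t => (K₁ * (2*Real.cos (ω₁*t+ω₁*r)) + K₂ * (2*Real.cos (ω₂*t+ω₂*r)))
          * Real.cos (ω₁*t+ω₁*r))
          = fun t => (2*K₁) * (Real.cos (ω₁*t+ω₁*r) * Real.cos (ω₁*t+ω₁*r))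
            + (2*K₂) * (Real.cos (ω₂*t+ω₂*r) * Real.cos (ω₁*t+ω₁*r)) := by
        funext t; ring
      rw [e, intervalIntegral.integral_add
        (((hcosc1.fun_mul hcosc1).intervalIntegrable _ _).const_mul _)
        (((hcosc2.fun_mul hcosc1).intervalIntegrable _ _).const_mul _),
        intervalIntegral.integral_const_mul, intervalIntegral.integral_const_mul, I11, I21]
      ring
    have hexp2 : ∫ t in (-r)..r, (K₁ * (2*Real.cos (ω₁*t+ω₁*r)) + K₂ * (2*Real.cos (ω₂*t+ω₂*r)))
        * Real.cos (ω₂*t+ω₂*r) = 2*K₂*r := by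
      have e : (fun t => (K₁ * (2*Real.cos (ω₁*t+ω₁*r)) + K₂ * (2*Real.cos (ω₂*t+ω₂*r)))
          * Real.cos (ω₂*t+ω₂*r))
          = fun t => (2*K₁) * (Real.cos (ω₁*t+ω₁*r) * Real.cos (ω₂*t+ω₂*r))
            + (2*K₂) * (Real.cos (ω₂*t+ω₂*r) * Real.cos (ω₂*t+ω₂*r)) := by
        funext t; ring
      rw [e, intervalIntegral.integral_add
        (((hcosc1.fun_mul hcosc2).intervalIntegrable _ _).const_mul _)
        (((hcosc2.fun_mul hcosc2).intervalIntegrable _ _).const_mul _),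
        intervalIntegral.integral_const_mul, intervalIntegral.integral_const_mul, I12, I22]
      ring
    have hK1 : K₁ = 0 := by
      have h := (hcong ω₁).symm.trans hJ1
      rw [hexp1] at h
      have := mul_ne_zero (two_ne_zero (α := ℝ)) hrne
      rcases mul_eq_zero.1 (show K₁ * (2*r) = 0 by linarith) with h' | h'
      · exact h'
      · exact absurd h' this
    have hK2 : K₂ = 0 := by
      have h := (hcong ω₂).symm.trans hJ2
      rw [hexp2] at h
      have := mul_ne_zero (two_ne_zero (α := ℝ)) hrne
      rcases mul_eq_zero.1 (show K₂ * (2*r) = 0 by linarith) with h' | h'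
      · exact h'
      · exact absurd h' this
    have hzode : ∀ s ∈ Icc (-r) r, z4 s = -(α₀ * z2 s) - β₀ * z s := by
      intro s hs
      have h := hzeq s hs
      rw [hK1, hK2] at h
      linear_combination h
    -- comparison with explicit solution
    set A : ℝ := (ω₂^2 * z (-r) + z2 (-r))/(ω₂^2-ω₁^2) with hAdef
    set B : ℝ := -(ω₁^2 * z (-r) + z2 (-r))/(ω₂^2-ω₁^2) with hBdef
    set w : ℝ → ℝ := fun t => z t - A * Real.cos (ω₁*t+ω₁*r) - B * Real.cos (ω₂*t+ω₂*r)
      with hwdef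
    set w1 : ℝ → ℝ := fun t => z1 t + A*ω₁*Real.sin (ω₁*t+ω₁*r) + B*ω₂*Real.sin (ω₂*t+ω₂*r)
      with hw1def
    set w2 : ℝ → ℝ := fun t => z2 t + A*ω₁^2*Real.cos (ω₁*t+ω₁*r) + B*ω₂^2*Real.cos (ω₂*t+ω₂*r)
      with hw2def
    set w3 : ℝ → ℝ := fun t => z3 t - A*ω₁^3*Real.sin (ω₁*t+ω₁*r) - B*ω₂^3*Real.sin (ω₂*t+ω₂*r)
      with hw3def
    set w4 : ℝ → ℝ := fun t => z4 t - A*ω₁^4*Real.cos (ω₁*t+ω₁*r) - B*ω₂^4*Real.cos (ω₂*t+ω₂*r)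
      with hw4def
    have hw1 : ∀ s, HasDerivAt w (w1 s) s := by
      intro s
      have h := ((hz1 s).sub ((hdcos ω₁ (ω₁*r) s).const_mul A)).sub
        ((hdcos ω₂ (ω₂*r) s).const_mul B)
      refine h.congr_deriv (Eq.symm ?_)
      simp only [hw1def]
      ring
    have hw2 : ∀ s, HasDerivAt w1 (w2 s) s := by
      intro s
      have h := ((hz2 s).add ((hdsin ω₁ (ω₁*r) s).const_mul (A*ω₁))).add
        ((hdsin ω₂ (ω₂*r) s).const_mul (B*ω₂))
      refine h.congr_deriv (Eq.symm ?_)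
      simp only [hw2def]
      ring
    have hw3 : ∀ s, HasDerivAt w2 (w3 s) s := by
      intro s
      have h := ((hz3 s).add ((hdcos ω₁ (ω₁*r) s).const_mul (A*ω₁^2))).add
        ((hdcos ω₂ (ω₂*r) s).const_mul (B*ω₂^2))
      refine h.congr_deriv (Eq.symm ?_)
      simp only [hw3def]
      ring
    have hw4 : ∀ s, HasDerivAt w3 (w4 s) s := by
      intro s
      have h := ((hz4 s).sub ((hdsin ω₁ (ω₁*r) s).const_mul (A*ω₁^3))).sub
        ((hdsin ω₂ (ω₂*r) s).const_mul (B*ω₂^3))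
      refine h.congr_deriv (Eq.symm ?_)
      simp only [hw4def]
      ring
    have hwode : ∀ s ∈ Icc (-r) r, w4 s = -(α₀ * w2 s) - β₀ * w s := by
      intro s hs
      have h := hzode s hs
      simp only [hw4def, hw2def, hwdef]
      rw [hα, hβ] at h ⊢
      linear_combination h
    have hinit0 : w (-r) = 0 := by
      simp only [hwdef, hAdef, hBdef]
      rw [show ω₁*(-r)+ω₁*r = 0 by ring, show ω₂*(-r)+ω₂*r = 0 by ring, Real.cos_zero]
      field_simp
      ring
    have hinit1 : w1 (-r) = 0 := by
      simp only [hw1def]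
      rw [show ω₁*(-r)+ω₁*r = 0 by ring, show ω₂*(-r)+ω₂*r = 0 by ring, Real.sin_zero, hza1]
      ring
    have hinit2 : w2 (-r) = 0 := by
      simp only [hw2def, hAdef, hBdef]
      rw [show ω₁*(-r)+ω₁*r = 0 by ring, show ω₂*(-r)+ω₂*r = 0 by ring, Real.cos_zero]
      field_simp
      ring
    have hinit3 : w3 (-r) = 0 := by
      simp only [hw3def]
      rw [show ω₁*(-r)+ω₁*r = 0 by ring, show ω₂*(-r)+ω₂*r = 0 by ring, Real.sin_zero, hza3]
      ring
    have hwzero : ∀ s ∈ Icc (-r) r, w s = 0 :=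
      ode_zero hw1 hw2 hw3 hw4 hwode hinit0 hinit1 hinit2 hinit3
    -- conclude A = B = 0 from orthogonality
    have hzrep : ∀ t ∈ Icc (-r) r, z t = A * Real.cos (ω₁*t+ω₁*r) + B * Real.cos (ω₂*t+ω₂*r) := by
      intro t ht
      have h := hwzero t ht
      simp only [hwdef] at h
      linarith
    have hKint : ∀ (ω : ℝ), Continuous (fun t => Real.cos (ω*t+ω*r)) →
        (∫ t in (-r)..r, x₁ t * (2*Real.cos (ω*t+ω*r)))
          - (∫ t in (-r)..r, x₂ t * (2*Real.cos (ω*t+ω*r)))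
        = ∫ t in (-r)..r, z t * (2*Real.cos (ω*t+ω*r)) := by
      intro ω hco
      rw [← intervalIntegral.integral_sub
        ((hx₁.continuous.fun_mul (continuous_const.fun_mul hco)).intervalIntegrable _ _)
        ((hx₂.continuous.fun_mul (continuous_const.fun_mul hco)).intervalIntegrable _ _)]
      apply intervalIntegral.integral_congr
      intro t _
      simp only [hzdef]
      ring
    have hz1int : ∫ t in (-r)..r, z t * (2*Real.cos (ω₁*t+ω₁*r)) = 0 := by
      rw [← hKint ω₁ hcosc1]
      have hd : (∫ t in (-r)..r, x₁ t * (2*Real.cos (ω₁*t+ω₁*r)))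
          - (∫ t in (-r)..r, x₂ t * (2*Real.cos (ω₁*t+ω₁*r))) = (2*r) * K₁ := by
        rw [hK₁def, mul_sub, ← mul_assoc, ← mul_assoc, mul_one_div_cancel (mul_ne_zero two_ne_zero hrne), one_mul, one_mul]
      rw [hd, hK1, mul_zero]
    have hz2int : ∫ t in (-r)..r, z t * (2*Real.cos (ω₂*t+ω₂*r)) = 0 := by
      rw [← hKint ω₂ hcosc2]
      have hd : (∫ t in (-r)..r, x₁ t * (2*Real.cos (ω₂*t+ω₂*r)))
          - (∫ t in (-r)..r, x₂ t * (2*Real.cos (ω₂*t+ω₂*r))) = (2*r) * K₂ := by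
        rw [hK₂def, mul_sub, ← mul_assoc, ← mul_assoc, mul_one_div_cancel (mul_ne_zero two_ne_zero hrne), one_mul, one_mul]
      rw [hd, hK2, mul_zero]
    have hArep : ∫ t in (-r)..r, z t * (2*Real.cos (ω₁*t+ω₁*r)) = 2*A*r := by
      have ec : (∫ t in (-r)..r, z t * (2*Real.cos (ω₁*t+ω₁*r)))
          = ∫ t in (-r)..r, ((2*A) * (Real.cos (ω₁*t+ω₁*r) * Real.cos (ω₁*t+ω₁*r))
            + (2*B) * (Real.cos (ω₂*t+ω₂*r) * Real.cos (ω₁*t+ω₁*r))) := by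
        apply intervalIntegral.integral_congr
        intro t ht
        rw [huIcc] at ht
        simp only
        rw [hzrep t ht]
        ring
      rw [ec, intervalIntegral.integral_add
          (((hcosc1.fun_mul hcosc1).intervalIntegrable _ _).const_mul _)
          (((hcosc2.fun_mul hcosc1).intervalIntegrable _ _).const_mul _),
          intervalIntegral.integral_const_mul, intervalIntegral.integral_const_mul, I11, I21]
      ring
    have hBrep : ∫ t in (-r)..r, z t * (2*Real.cos (ω₂*t+ω₂*r)) = 2*B*r := by
      have ec : (∫ t in (-r)..r, z t * (2*Real.cos (ω₂*t+ω₂*r)))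
          = ∫ t in (-r)..r, ((2*A) * (Real.cos (ω₁*t+ω₁*r) * Real.cos (ω₂*t+ω₂*r))
            + (2*B) * (Real.cos (ω₂*t+ω₂*r) * Real.cos (ω₂*t+ω₂*r))) := by
        apply intervalIntegral.integral_congr
        intro t ht
        rw [huIcc] at ht
        simp only
        rw [hzrep t ht]
        ring
      rw [ec, intervalIntegral.integral_add
          (((hcosc1.fun_mul hcosc2).intervalIntegrable _ _).const_mul _)
          (((hcosc2.fun_mul hcosc2).intervalIntegrable _ _).const_mul _),
          intervalIntegral.integral_const_mul, intervalIntegral.integral_const_mul, I12, I22]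
      ring
    have hA0 : A = 0 := by
      have := hArep.symm.trans hz1int
      rcases mul_eq_zero.1 (show A * (2*r) = 0 by linarith) with h' | h'
      · exact h'
      · exact absurd h' (mul_ne_zero two_ne_zero hrne)
    have hB0 : B = 0 := by
      have := hBrep.symm.trans hz2int
      rcases mul_eq_zero.1 (show B * (2*r) = 0 by linarith) with h' | h'
      · exact h'
      · exact absurd h' (mul_ne_zero two_ne_zero hrne)
    intro s hs
    have h := hzrep s hs
    rw [hA0, hB0] at h
    simp only [hzdef] at h
    linarith
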